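/- Let D be the trapezoidal fuzzy variable (a − α, a, b, b + β) with α > 0, β > 0, 0 < a − α, and a ≤ b, and let λ ∈ [0,1]. Then E_λ(1/D) = ∫_0^∞ m_λ(D ≤ 1/r) dr = (λ/α)·ln(a/(a − α)) + ((1 − λ)/β)·ln((b + β)/b). -/

import Mathlib

open MeasureTheory Set

/-- Possibility measure of an event `A` built from membership function `μ`
(with the convention `sSup ∅ = 0`, which holds for `Real.sSup`). -/
noncomputable def Pos (μ : ℝ → ℝ) (A : Set ℝ) : ℝ := sSup (μ '' A)

/-- Necessity measure associated with `μ`. -/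
noncomputable def Nec (μ : ℝ → ℝ) (A : Set ℝ) : ℝ := 1 - Pos μ Aᶜ

/-- The parametric measure `m_λ(A) = λ·Pos(A) + (1−λ)·Nec(A)`. -/
noncomputable def mMeas (l : ℝ) (μ : ℝ → ℝ) (A : Set ℝ) : ℝ :=
  l * Pos μ A + (1 - l) * Nec μ A

/-- The `m_λ`-expected value of the fuzzy variable with membership function `μ`:
`E_λ(ξ) = ∫_{−∞}^0 (m_λ([r,∞)) − 1) dr + ∫_0^∞ m_λ([r,∞)) dr`. -/
noncomputable def Eexp (l : ℝ) (μ : ℝ → ℝ) : ℝ :=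
  (∫ r in Set.Iic (0:ℝ), (mMeas l μ (Set.Ici r) - 1)) +
  (∫ r in Set.Ioi (0:ℝ), mMeas l μ (Set.Ici r))

/-- Membership function of the trapezoidal fuzzy variable `(r1,r2,r3,r4)`. -/
noncomputable def trapMF (r1 r2 r3 r4 : ℝ) : ℝ → ℝ := fun x =>
  if r1 ≤ x ∧ x ≤ r2 then (x - r1) / (r2 - r1)
  else if r2 ≤ x ∧ x ≤ r3 then 1
  else if r3 ≤ x ∧ x ≤ r4 then (r4 - x) / (r4 - r3)
  else 0

/-- Membership function of the triangular fuzzy variable `(r1,r2,r4)`. -/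
noncomputable def triMF (r1 r2 r4 : ℝ) : ℝ → ℝ := fun x =>
  if r1 ≤ x ∧ x ≤ r2 then (x - r1) / (r2 - r1)
  else if r2 ≤ x ∧ x ≤ r4 then (r4 - x) / (r4 - r2)
  else 0

/-- Membership function of the trapezoidal fuzzy variable `(a−α, a, b, b+β)`. -/
noncomputable def trapMF2 (a b α β : ℝ) : ℝ → ℝ := fun x =>
  if a - α ≤ x ∧ x ≤ a then 1 - (a - x) / α
  else if a ≤ x ∧ x ≤ b then 1
  else if b ≤ x ∧ x ≤ b + β then 1 - (x - b) / β
  else 0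

/-- Membership function of the triangular fuzzy variable `(a−α, a, a+β)`. -/
noncomputable def triMF2 (a α β : ℝ) : ℝ → ℝ := fun x =>
  if a - α ≤ x ∧ x ≤ a then 1 - (a - x) / α
  else if a ≤ x ∧ x ≤ a + β then 1 - (x - a) / β
  else 0

section Aux

variable {a b α β : ℝ}

lemma trap_le_one (hα : 0 < α) (hβ : 0 < β) (x : ℝ) : trapMF2 a b α β x ≤ 1 := by
  unfold trapMF2
  split_ifs with h1 h2 h3
  · have : 0 ≤ (a - x) / α := div_nonneg (by linarith [h1.2]) hα.le
    linarith
  · exact le_refl _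
  · have : 0 ≤ (x - b) / β := div_nonneg (by linarith [h3.1]) hβ.le
    linarith
  · norm_num

lemma trap_nonneg (hα : 0 < α) (hβ : 0 < β) (x : ℝ) : 0 ≤ trapMF2 a b α β x := by
  unfold trapMF2
  split_ifs with h1 h2 h3
  · have : (a - x) / α ≤ 1 := by rw [div_le_one hα]; linarith [h1.1]
    linarith
  · norm_num
  · have : (x - b) / β ≤ 1 := by rw [div_le_one hβ]; linarith [h3.2]
    linarith
  · exact le_refl _

lemma trap_zero_left (hα : 0 < α) (hab : a ≤ b) {x : ℝ} (hx : x < a - α) :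
    trapMF2 a b α β x = 0 := by
  unfold trapMF2
  split_ifs with h1 h2 h3
  · linarith [h1.1]
  · linarith [h2.1]
  · linarith [h3.1]
  · rfl

lemma trap_zero_right (hα : 0 < α) (hβ : 0 < β) (hab : a ≤ b) {x : ℝ} (hx : b + β < x) :
    trapMF2 a b α β x = 0 := by
  unfold trapMF2
  split_ifs with h1 h2 h3
  · linarith [h1.2]
  · linarith [h2.2]
  · linarith [h3.2]
  · rfl

lemma trap_one (hα : 0 < α) {x : ℝ} (h1 : a ≤ x) (h2 : x ≤ b) :
    trapMF2 a b α β x = 1 := by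
  unfold trapMF2
  split_ifs with g1 g2 g3
  · have : x = a := le_antisymm g1.2 h1
    simp [this]
  · rfl
  · exact absurd ⟨h1, h2⟩ g2
  · exact absurd ⟨h1, h2⟩ g2

lemma trap_left (hα : 0 < α) {x : ℝ} (h1 : a - α ≤ x) (h2 : x ≤ a) :
    trapMF2 a b α β x = 1 - (a - x) / α := by
  unfold trapMF2
  rw [if_pos ⟨h1, h2⟩]

lemma trap_right (hα : 0 < α) (hβ : 0 < β) (hab : a ≤ b) {x : ℝ}
    (h1 : b ≤ x) (h2 : x ≤ b + β) :
    trapMF2 a b α β x = 1 - (x - b) / β := by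
  unfold trapMF2
  split_ifs with g1 g2 g3
  · have hxa : x = a := le_antisymm g1.2 (hab.trans h1)
    have hxb : x = b := le_antisymm (hxa ▸ hab) h1
    rw [hxa]
    rw [hxa] at hxb
    simp [← hxb]
  · have hxb : x = b := le_antisymm g2.2 h1
    simp [hxb]
  · rfl
  · exact absurd ⟨h1, h2⟩ g3

lemma pos_Iic_low (hα : 0 < α) (hβ : 0 < β) (hab : a ≤ b) {t : ℝ} (ht : t < a - α) :
    Pos (trapMF2 a b α β) (Iic t) = 0 := by
  apply IsGreatest.csSup_eq
  constructor
  · exact ⟨t, self_mem_Iic, trap_zero_left hα hab ht⟩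
  · rintro y ⟨x, hx, rfl⟩
    rw [trap_zero_left hα hab (lt_of_le_of_lt hx ht)]

lemma pos_Iic_mid (hα : 0 < α) (hβ : 0 < β) (hab : a ≤ b) {t : ℝ}
    (h1 : a - α ≤ t) (h2 : t ≤ a) :
    Pos (trapMF2 a b α β) (Iic t) = 1 - (a - t) / α := by
  apply IsGreatest.csSup_eq
  constructor
  · exact ⟨t, self_mem_Iic, trap_left hα h1 h2⟩
  · rintro y ⟨x, hx, rfl⟩
    rcases lt_or_ge x (a - α) with hc | hc
    · rw [trap_zero_left hα hab hc]
      have : (a - t) / α ≤ 1 := by rw [div_le_one hα]; linarith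
      linarith
    · rw [trap_left hα hc (le_trans hx h2)]
      have : (a - t) / α ≤ (a - x) / α :=
        (div_le_div_iff_of_pos_right hα).mpr (by linarith [mem_Iic.mp hx])
      linarith

lemma pos_Iic_high (hα : 0 < α) (hβ : 0 < β) (hab : a ≤ b) {t : ℝ} (ht : a ≤ t) :
    Pos (trapMF2 a b α β) (Iic t) = 1 := by
  apply IsGreatest.csSup_eq
  constructor
  · exact ⟨a, ht, trap_one hα le_rfl hab⟩
  · rintro y ⟨x, hx, rfl⟩
    exact trap_le_one hα hβ x

lemma pos_Ioi_low (hα : 0 < α) (hβ : 0 < β) (hab : a ≤ b) {t : ℝ} (ht : t < b) :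
    Pos (trapMF2 a b α β) (Ioi t) = 1 := by
  apply IsGreatest.csSup_eq
  constructor
  · refine ⟨max a ((t + b) / 2), ?_, trap_one hα (le_max_left _ _)
      (max_le hab (by linarith))⟩
    exact mem_Ioi.mpr (lt_of_lt_of_le (show t < (t + b) / 2 by linarith) (le_max_right _ _))
  · rintro y ⟨x, hx, rfl⟩
    exact trap_le_one hα hβ x

lemma pos_Ioi_mid (hα : 0 < α) (hβ : 0 < β) (hab : a ≤ b) {t : ℝ}
    (h1 : b ≤ t) (h2 : t ≤ b + β) :
    Pos (trapMF2 a b α β) (Ioi t) = 1 - (t - b) / β := by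
  have hne : ((trapMF2 a b α β) '' (Ioi t)).Nonempty :=
    ⟨trapMF2 a b α β (t + 1), ⟨t + 1, by simp, rfl⟩⟩
  have hbdd : BddAbove ((trapMF2 a b α β) '' (Ioi t)) := by
    refine ⟨1, ?_⟩
    rintro y ⟨x, hx, rfl⟩
    exact trap_le_one hα hβ x
  unfold Pos
  apply le_antisymm
  · apply csSup_le hne
    rintro y ⟨x, hx, rfl⟩
    rcases le_or_gt x (b + β) with hc | hc
    · rw [trap_right hα hβ hab (h1.trans (le_of_lt hx)) hc]
      have : (t - b) / β ≤ (x - b) / β := (div_le_div_iff_of_pos_right hβ).mpr (by linarith [mem_Ioi.mp hx])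
      linarith
    · rw [trap_zero_right hα hβ hab hc]
      have : (t - b) / β ≤ 1 := by rw [div_le_one hβ]; linarith
      linarith
  · rw [le_csSup_iff hbdd hne]
    intro u hu
    by_contra hcon
    push_neg at hcon
    rcases eq_or_lt_of_le h2 with heq | hlt
    · have h0 : trapMF2 a b α β (t + 1) = 0 :=
        trap_zero_right hα hβ hab (by linarith)
      have := hu ⟨t + 1, by simp, rfl⟩
      rw [h0] at this
      have : (t - b) / β = 1 := by rw [div_eq_one_iff_eq hβ.ne']; linarith
      linarith
    · have hεpos : 0 < 1 - (t - b) / β - u := by linarith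
      obtain ⟨δ, hδ1, hδ2, hδ3⟩ :
          ∃ δ : ℝ, 0 < δ ∧ δ ≤ β * (1 - (t - b) / β - u) ∧ δ ≤ b + β - t :=
        ⟨min (β * (1 - (t - b) / β - u)) (b + β - t),
          lt_min (by positivity) (by linarith), min_le_left _ _, min_le_right _ _⟩
      have hxt : t < t + δ / 2 := by linarith
      have hxle : t + δ / 2 ≤ b + β := by linarith
      have hval : trapMF2 a b α β (t + δ / 2) = 1 - (t + δ / 2 - b) / β :=
        trap_right hα hβ hab (by linarith) hxle
      have hub := hu ⟨t + δ / 2, hxt, rfl⟩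
      rw [hval] at hub
      have e1 : (t + δ / 2 - b) / β = (t - b) / β + (δ / 2) / β := by ring
      have e2 : (δ / 2) / β < 1 - (t - b) / β - u := by
        rw [div_lt_iff₀ hβ]
        nlinarith [mul_pos hβ hεpos]
      rw [e1] at hub
      linarith

lemma pos_Ioi_high (hα : 0 < α) (hβ : 0 < β) (hab : a ≤ b) {t : ℝ} (ht : b + β ≤ t) :
    Pos (trapMF2 a b α β) (Ioi t) = 0 := by
  apply IsGreatest.csSup_eq
  constructor
  · exact ⟨t + 1, by simp, trap_zero_right hα hβ hab (by linarith)⟩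
  · rintro y ⟨x, hx, rfl⟩
    rw [trap_zero_right hα hβ hab (lt_of_le_of_lt ht hx)]

end Aux

theorem stmt_9 (a b α β l : ℝ)
    (hα : 0 < α) (hβ : 0 < β) (hpos : 0 < a - α) (hab : a ≤ b)
    (hl : l ∈ Set.Icc (0:ℝ) 1) :
    (∫ r in Set.Ioi (0:ℝ), mMeas l (trapMF2 a b α β) (Set.Iic (1 / r))) =
      l / α * Real.log (a / (a - α)) + (1 - l) / β * Real.log ((b + β) / b) := by
  have ha : 0 < a := by linarith
  have hb : 0 < b := lt_of_lt_of_le ha hab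
  have hbβ : 0 < b + β := by linarith
  set c1 : ℝ := 1 / (b + β) with hc1
  set c2 : ℝ := 1 / b with hc2
  set c3 : ℝ := 1 / a with hc3
  set c4 : ℝ := 1 / (a - α) with hc4
  have hc1pos : 0 < c1 := by positivity
  have hc2pos : 0 < c2 := by positivity
  have hc3pos : 0 < c3 := by positivity
  have hc4pos : 0 < c4 := by positivity
  have h12 : c1 < c2 := one_div_lt_one_div_of_lt hb (by linarith)
  have h23 : c2 ≤ c3 := one_div_le_one_div_of_le ha hab
  have h34 : c3 < c4 := one_div_lt_one_div_of_lt hpos (by linarith)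
  -- the explicit piecewise integrand
  set G : ℝ → ℝ := fun r =>
      (Ioc (0:ℝ) c1).indicator (fun _ => (1:ℝ)) r
    + (Ioc c1 c2).indicator (fun r => l + (1 - l) * ((1 / r - b) / β)) r
    + (Ioc c2 c3).indicator (fun _ => l) r
    + (Ioc c3 c4).indicator (fun r => l * (1 - (a - 1 / r) / α)) r with hG
  have hEq : EqOn (fun r => mMeas l (trapMF2 a b α β) (Set.Iic (1 / r))) G (Ioi (0:ℝ)) := by
    intro r hr
    have hr0 : 0 < r := hr
    rcases le_or_gt r c1 with H1 | H1
    · -- 1/r ≥ b + β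
      have ht : b + β ≤ 1 / r := by
        rw [hc1] at H1
        calc b + β = 1 / (1 / (b + β)) := by rw [one_div_one_div]
        _ ≤ 1 / r := one_div_le_one_div_of_le hr0 H1
      have e : mMeas l (trapMF2 a b α β) (Set.Iic (1 / r)) = 1 := by
        unfold mMeas Nec
        rw [compl_Iic, pos_Iic_high hα hβ hab (by linarith),
          pos_Ioi_high hα hβ hab ht]
        ring
      simp only [hG]
      rw [e, indicator_of_mem (show r ∈ Ioc (0:ℝ) c1 from ⟨hr0, H1⟩),
        indicator_of_notMem (show r ∉ Ioc c1 c2 by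
          simp only [mem_Ioc, not_and, not_le]; intro h; linarith),
        indicator_of_notMem (show r ∉ Ioc c2 c3 by
          simp only [mem_Ioc, not_and, not_le]; intro h; linarith),
        indicator_of_notMem (show r ∉ Ioc c3 c4 by
          simp only [mem_Ioc, not_and, not_le]; intro h; linarith)]
      ring
    rcases le_or_gt r c2 with H2 | H2
    · have ht1 : b ≤ 1 / r := by
        calc b = 1 / (1 / b) := by rw [one_div_one_div]
        _ ≤ 1 / r := one_div_le_one_div_of_le hr0 H2
      have ht2 : 1 / r < b + β := by
        calc 1 / r < 1 / c1 := one_div_lt_one_div_of_lt hc1pos H1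
        _ = b + β := by rw [hc1, one_div_one_div]
      have e : mMeas l (trapMF2 a b α β) (Set.Iic (1 / r))
          = l + (1 - l) * ((1 / r - b) / β) := by
        unfold mMeas Nec
        rw [compl_Iic, pos_Iic_high hα hβ hab (by linarith),
          pos_Ioi_mid hα hβ hab ht1 ht2.le]
        ring
      simp only [hG]
      rw [e, indicator_of_notMem (show r ∉ Ioc (0:ℝ) c1 by
          simp only [mem_Ioc, not_and, not_le]; intro h; linarith),
        indicator_of_mem (show r ∈ Ioc c1 c2 from ⟨H1, H2⟩),
        indicator_of_notMem (show r ∉ Ioc c2 c3 by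
          simp only [mem_Ioc, not_and, not_le]; intro h; linarith),
        indicator_of_notMem (show r ∉ Ioc c3 c4 by
          simp only [mem_Ioc, not_and, not_le]; intro h; linarith)]
      ring
    rcases le_or_gt r c3 with H3 | H3
    · have ht1 : a ≤ 1 / r := by
        calc a = 1 / (1 / a) := by rw [one_div_one_div]
        _ ≤ 1 / r := one_div_le_one_div_of_le hr0 H3
      have ht2 : 1 / r < b := by
        calc 1 / r < 1 / c2 := one_div_lt_one_div_of_lt hc2pos H2
        _ = b := by rw [hc2, one_div_one_div]
      have e : mMeas l (trapMF2 a b α β) (Set.Iic (1 / r)) = l := by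
        unfold mMeas Nec
        rw [compl_Iic, pos_Iic_high hα hβ hab ht1, pos_Ioi_low hα hβ hab ht2]
        ring
      simp only [hG]
      rw [e, indicator_of_notMem (show r ∉ Ioc (0:ℝ) c1 by
          simp only [mem_Ioc, not_and, not_le]; intro h; linarith),
        indicator_of_notMem (show r ∉ Ioc c1 c2 by
          simp only [mem_Ioc, not_and, not_le]; intro h; linarith),
        indicator_of_mem (show r ∈ Ioc c2 c3 from ⟨H2, H3⟩),
        indicator_of_notMem (show r ∉ Ioc c3 c4 by
          simp only [mem_Ioc, not_and, not_le]; intro h; linarith)]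
      ring
    rcases le_or_gt r c4 with H4 | H4
    · have ht1 : a - α ≤ 1 / r := by
        calc a - α = 1 / (1 / (a - α)) := by rw [one_div_one_div]
        _ ≤ 1 / r := one_div_le_one_div_of_le hr0 H4
      have ht2 : 1 / r < a := by
        calc 1 / r < 1 / c3 := one_div_lt_one_div_of_lt hc3pos H3
        _ = a := by rw [hc3, one_div_one_div]
      have e : mMeas l (trapMF2 a b α β) (Set.Iic (1 / r))
          = l * (1 - (a - 1 / r) / α) := by
        unfold mMeas Nec
        rw [compl_Iic, pos_Iic_mid hα hβ hab ht1 ht2.le,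
          pos_Ioi_low hα hβ hab (by linarith)]
        ring
      simp only [hG]
      rw [e, indicator_of_notMem (show r ∉ Ioc (0:ℝ) c1 by
          simp only [mem_Ioc, not_and, not_le]; intro h; linarith),
        indicator_of_notMem (show r ∉ Ioc c1 c2 by
          simp only [mem_Ioc, not_and, not_le]; intro h; linarith),
        indicator_of_notMem (show r ∉ Ioc c2 c3 by
          simp only [mem_Ioc, not_and, not_le]; intro h; linarith),
        indicator_of_mem (show r ∈ Ioc c3 c4 from ⟨H3, H4⟩)]
      ring
    · have ht : 1 / r < a - α := by
        calc 1 / r < 1 / c4 := one_div_lt_one_div_of_lt hc4pos H4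
        _ = a - α := by rw [hc4, one_div_one_div]
      have e : mMeas l (trapMF2 a b α β) (Set.Iic (1 / r)) = 0 := by
        unfold mMeas Nec
        rw [compl_Iic, pos_Iic_low hα hβ hab ht, pos_Ioi_low hα hβ hab (by linarith)]
        ring
      simp only [hG]
      rw [e, indicator_of_notMem (show r ∉ Ioc (0:ℝ) c1 by
          simp only [mem_Ioc, not_and, not_le]; intro h; linarith),
        indicator_of_notMem (show r ∉ Ioc c1 c2 by
          simp only [mem_Ioc, not_and, not_le]; intro h; linarith),
        indicator_of_notMem (show r ∉ Ioc c2 c3 by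
          simp only [mem_Ioc, not_and, not_le]; intro h; linarith),
        indicator_of_notMem (show r ∉ Ioc c3 c4 by
          simp only [mem_Ioc, not_and, not_le]; intro h; linarith)]
      ring
  rw [setIntegral_congr_fun measurableSet_Ioi hEq]
  -- integrability of the pieces
  have hI1 : Integrable ((Ioc (0:ℝ) c1).indicator (fun _ => (1:ℝ))) := by
    rw [integrable_indicator_iff measurableSet_Ioc]
    exact integrableOn_const measure_Ioc_lt_top.ne
  have hcont2 : ContinuousOn (fun r : ℝ => l + (1 - l) * ((1 / r - b) / β)) (Icc c1 c2) := by
    apply continuousOn_const.add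
    apply continuousOn_const.mul
    apply ContinuousOn.div_const
    apply ContinuousOn.sub _ continuousOn_const
    exact continuousOn_const.div continuousOn_id fun x hx => (lt_of_lt_of_le hc1pos hx.1).ne'
  have hI2 : Integrable ((Ioc c1 c2).indicator (fun r => l + (1 - l) * ((1 / r - b) / β))) := by
    rw [integrable_indicator_iff measurableSet_Ioc]
    exact (hcont2.integrableOn_Icc).mono_set Ioc_subset_Icc_self
  have hI3 : Integrable ((Ioc c2 c3).indicator (fun _ => l)) := by
    rw [integrable_indicator_iff measurableSet_Ioc]
    exact integrableOn_const measure_Ioc_lt_top.ne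
  have hcont4 : ContinuousOn (fun r : ℝ => l * (1 - (a - 1 / r) / α)) (Icc c3 c4) := by
    apply continuousOn_const.mul
    apply ContinuousOn.sub continuousOn_const
    apply ContinuousOn.div_const
    apply ContinuousOn.sub continuousOn_const
    exact continuousOn_const.div continuousOn_id fun x hx => (lt_of_lt_of_le hc3pos hx.1).ne'
  have hI4 : Integrable ((Ioc c3 c4).indicator (fun r => l * (1 - (a - 1 / r) / α))) := by
    rw [integrable_indicator_iff measurableSet_Ioc]
    exact (hcont4.integrableOn_Icc).mono_set Ioc_subset_Icc_self
  have split : (∫ r in Ioi (0:ℝ), G r)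
      = (∫ r in Ioi (0:ℝ), (Ioc (0:ℝ) c1).indicator (fun _ => (1:ℝ)) r)
      + (∫ r in Ioi (0:ℝ), (Ioc c1 c2).indicator (fun r => l + (1 - l) * ((1 / r - b) / β)) r)
      + (∫ r in Ioi (0:ℝ), (Ioc c2 c3).indicator (fun _ => l) r)
      + (∫ r in Ioi (0:ℝ), (Ioc c3 c4).indicator (fun r => l * (1 - (a - 1 / r) / α)) r) := by
    have hadd12 : IntegrableOn (fun r : ℝ =>
        (Ioc (0:ℝ) c1).indicator (fun _ => (1:ℝ)) r
        + (Ioc c1 c2).indicator (fun r => l + (1 - l) * ((1 / r - b) / β)) r)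
        (Ioi (0:ℝ)) := (hI1.integrableOn).add hI2.integrableOn
    have hadd123 : IntegrableOn (fun r : ℝ =>
        (Ioc (0:ℝ) c1).indicator (fun _ => (1:ℝ)) r
        + (Ioc c1 c2).indicator (fun r => l + (1 - l) * ((1 / r - b) / β)) r
        + (Ioc c2 c3).indicator (fun _ => l) r)
        (Ioi (0:ℝ)) := hadd12.add hI3.integrableOn
    simp only [hG]
    rw [integral_add hadd123 hI4.integrableOn,
      integral_add hadd12 hI3.integrableOn,
      integral_add hI1.integrableOn hI2.integrableOn]
  rw [split]
  have inter1 : Ioi (0:ℝ) ∩ Ioc (0:ℝ) c1 = Ioc 0 c1 :=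
    inter_eq_self_of_subset_right fun x hx => hx.1
  have inter2 : Ioi (0:ℝ) ∩ Ioc c1 c2 = Ioc c1 c2 :=
    inter_eq_self_of_subset_right fun x hx => lt_trans hc1pos hx.1
  have inter3 : Ioi (0:ℝ) ∩ Ioc c2 c3 = Ioc c2 c3 :=
    inter_eq_self_of_subset_right fun x hx => lt_trans hc2pos hx.1
  have inter4 : Ioi (0:ℝ) ∩ Ioc c3 c4 = Ioc c3 c4 :=
    inter_eq_self_of_subset_right fun x hx => lt_trans hc3pos hx.1
  rw [setIntegral_indicator measurableSet_Ioc, inter1,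
    setIntegral_indicator measurableSet_Ioc, inter2,
    setIntegral_indicator measurableSet_Ioc, inter3,
    setIntegral_indicator measurableSet_Ioc, inter4,
    ← intervalIntegral.integral_of_le hc1pos.le,
    ← intervalIntegral.integral_of_le h12.le,
    ← intervalIntegral.integral_of_le h23,
    ← intervalIntegral.integral_of_le h34.le]
  -- compute the four interval integrals
  have e1 : (∫ _ in (0:ℝ)..c1, (1:ℝ)) = c1 := by simp
  have e3 : (∫ _ in c2..c3, l) = (c3 - c2) * l := by simp [smul_eq_mul]
  have rw2 : (fun r : ℝ => l + (1 - l) * ((1 / r - b) / β))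
      = fun r : ℝ => ((1 - l) / β) * (1 / r) + (l - (1 - l) * b / β) := by
    funext r; ring
  have rw4 : (fun r : ℝ => l * (1 - (a - 1 / r) / α))
      = fun r : ℝ => (l / α) * (1 / r) + (l - l * a / α) := by
    funext r; ring
  have ii2 : IntervalIntegrable (fun r : ℝ => ((1 - l) / β) * (1 / r)) volume c1 c2 := by
    apply IntervalIntegrable.const_mul
    apply intervalIntegral.intervalIntegrable_one_div
    · intro x hx
      rw [uIcc_of_le h12.le] at hx
      exact (lt_of_lt_of_le hc1pos hx.1).ne'
    · exact continuousOn_id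
  have ii4 : IntervalIntegrable (fun r : ℝ => (l / α) * (1 / r)) volume c3 c4 := by
    apply IntervalIntegrable.const_mul
    apply intervalIntegral.intervalIntegrable_one_div
    · intro x hx
      rw [uIcc_of_le h34.le] at hx
      exact (lt_of_lt_of_le hc3pos hx.1).ne'
    · exact continuousOn_id
  have e2 : (∫ r in c1..c2, (l + (1 - l) * ((1 / r - b) / β)))
      = ((1 - l) / β) * Real.log (c2 / c1) + (c2 - c1) * (l - (1 - l) * b / β) := by
    rw [rw2, intervalIntegral.integral_add ii2 intervalIntegrable_const,
      intervalIntegral.integral_const_mul, integral_one_div_of_pos hc1pos hc2pos,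
      intervalIntegral.integral_const, smul_eq_mul]
  have e4 : (∫ r in c3..c4, (l * (1 - (a - 1 / r) / α)))
      = (l / α) * Real.log (c4 / c3) + (c4 - c3) * (l - l * a / α) := by
    rw [rw4, intervalIntegral.integral_add ii4 intervalIntegrable_const,
      intervalIntegral.integral_const_mul, integral_one_div_of_pos hc3pos hc4pos,
      intervalIntegral.integral_const, smul_eq_mul]
  rw [e1, e2, e3, e4]
  have log2 : Real.log (c2 / c1) = Real.log ((b + β) / b) := by
    congr 1
    rw [hc1, hc2]
    field_simp
  have log4 : Real.log (c4 / c3) = Real.log (a / (a - α)) := by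
    congr 1
    rw [hc3, hc4]
    field_simp
  rw [log2, log4, hc1, hc2, hc3, hc4]
  have hane : a ≠ 0 := ha.ne'
  have hbne : b ≠ 0 := hb.ne'
  have hbβne : b + β ≠ 0 := hbβ.ne'
  have haαne : a - α ≠ 0 := hpos.ne'
  field_simp
  ring
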